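/- Define for a pose (x,θ) and goal g with c := (cos θ, sin θ)·(g − x) ≥ 0 and d := |(−sin θ, cos θ)·(g − x)| the four motion prediction sets: M_B = B(g, ‖g − x‖); M_BC = B(g, ‖g − x‖) ∩ Cone(x, g, d); M_IC = IC(x, g, d); and the truncated set M_TC = conv{x, g, x + c·(cos θ, sin θ)} ∪ B(g, d). Then M_TC ⊆ M_IC ⊆ M_BC ⊆ M_B. -/

import Mathlib

open Real Metric Set
open scoped RealInnerProductSpace

noncomputable section

abbrev E2 := EuclideanSpace ℝ (Fin 2)

/-- Unit forward direction vector of orientation `θ`. -/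
def uvec (θ : ℝ) : E2 := WithLp.toLp 2 ![Real.cos θ, Real.sin θ]

/-- Unit normal (perpendicular) vector of orientation `θ`. -/
def nvec (θ : ℝ) : E2 := WithLp.toLp 2 ![-Real.sin θ, Real.cos θ]

/-- Two-argument arctangent, `atan2 y x`. -/
def atan2 (y x : ℝ) : ℝ := Complex.arg (x + y * Complex.I)

/-- The (unbounded) cone with apex `a`, base point `b`, and base radius `r`. -/
def cone (a b : E2) (r : ℝ) : Set E2 :=
  {p | ∃ α : ℝ, 0 ≤ α ∧ ∃ z ∈ closedBall b r, p = a + α • (z - a)}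

/-- The half-plane bounded at `a` pointing towards `b`. -/
def hplane (a b : E2) : Set E2 := {z | 0 ≤ ⟪b - a, z - a⟫}

/-- The bounded ice-cream cone with apex `a`, base point `b`, and radius `r`. -/
def icone (a b : E2) (r : ℝ) : Set E2 := convexHull ℝ ({a} ∪ closedBall b r)

lemma inner_uvec (θ : ℝ) (v : E2) : ⟪uvec θ, v⟫ = Real.cos θ * v 0 + Real.sin θ * v 1 := by
  simp [uvec, PiLp.inner_apply, Fin.sum_univ_two, RCLike.inner_apply]
  ring

lemma inner_nvec (θ : ℝ) (v : E2) : ⟪nvec θ, v⟫ = -Real.sin θ * v 0 + Real.cos θ * v 1 := by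
  simp [nvec, PiLp.inner_apply, Fin.sum_univ_two, RCLike.inner_apply]
  ring

lemma norm_uvec (θ : ℝ) : ‖uvec θ‖ = 1 := by
  have h : ⟪uvec θ, uvec θ⟫ = 1 := by
    rw [inner_uvec]; simp [uvec]
    nlinarith [Real.sin_sq_add_cos_sq θ]
  have := real_inner_self_eq_norm_sq (uvec θ)
  nlinarith [norm_nonneg (uvec θ)]

lemma norm_nvec (θ : ℝ) : ‖nvec θ‖ = 1 := by
  have h : ⟪nvec θ, nvec θ⟫ = 1 := by
    rw [inner_nvec]; simp [nvec]
    nlinarith [Real.sin_sq_add_cos_sq θ]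
  have := real_inner_self_eq_norm_sq (nvec θ)
  nlinarith [norm_nonneg (nvec θ)]

lemma pyth (θ : ℝ) (v : E2) : ⟪uvec θ, v⟫ ^ 2 + ⟪nvec θ, v⟫ ^ 2 = ‖v‖ ^ 2 := by
  rw [inner_uvec, inner_nvec, ← real_inner_self_eq_norm_sq]
  rw [real_inner_self_eq_norm_sq, EuclideanSpace.norm_sq_eq, Fin.sum_univ_two]
  simp only [Real.norm_eq_abs, sq_abs]
  nlinarith [Real.sin_sq_add_cos_sq θ]

set_option linter.unnecessarySeqFocus false in
lemma cone_convex (a b : E2) (r : ℝ) : Convex ℝ (cone a b r) := by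
  rintro p ⟨α, hα, z, hz, rfl⟩ q ⟨β, hβ, w, hw, rfl⟩ t s ht hs hts
  have htα := mul_nonneg ht hα
  have hsβ := mul_nonneg hs hβ
  by_cases h : t * α + s * β = 0
  · have h1 : t * α = 0 := by linarith
    have h2 : s * β = 0 := by linarith
    refine ⟨0, le_rfl, z, hz, ?_⟩
    match_scalars <;> linarith [hts]
  · have hS : 0 < t * α + s * β := lt_of_le_of_ne (by linarith) (Ne.symm h)
    refine ⟨t * α + s * β, le_of_lt hS,
      (t * α / (t * α + s * β)) • z + (s * β / (t * α + s * β)) • w, ?_, ?_⟩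
    · exact convex_closedBall b r hz hw (div_nonneg htα hS.le) (div_nonneg hsβ hS.le)
        (by field_simp)
    · match_scalars <;> field_simp <;> ring_nf <;> nlinarith [hts]

/-- Inclusion relation between the truncated ice-cream cone, the ice-cream
cone, the bounded cone, and the Lyapunov ball motion predictions. -/
theorem stmt_11 (x g : E2) (θ : ℝ)
    (c : ℝ) (hc : c = ⟪uvec θ, g - x⟫) (hc0 : 0 ≤ c)
    (d : ℝ) (hd : d = |⟪nvec θ, g - x⟫|)
    (MB MBC MIC MTC : Set E2)
    (hMB : MB = closedBall g ‖g - x‖)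
    (hMBC : MBC = closedBall g ‖g - x‖ ∩ cone x g d)
    (hMIC : MIC = icone x g d)
    (hMTC : MTC = convexHull ℝ {x, g, x + c • uvec θ} ∪ closedBall g d) :
    MTC ⊆ MIC ∧ MIC ⊆ MBC ∧ MBC ⊆ MB := by
  have hd0 : 0 ≤ d := hd ▸ abs_nonneg _
  have hdle : d ≤ ‖g - x‖ := by
    calc d = |⟪nvec θ, g - x⟫| := hd
    _ ≤ ‖nvec θ‖ * ‖g - x‖ := abs_real_inner_le_norm _ _
    _ = ‖g - x‖ := by rw [norm_nvec, one_mul]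
  -- the projection point lies in the small ball
  have hproj : x + c • uvec θ ∈ closedBall g d := by
    have hn2 : ‖x + c • uvec θ - g‖ ^ 2 = d ^ 2 := by
      have hexp : x + c • uvec θ - g = c • uvec θ - (g - x) := by abel
      rw [hexp, norm_sub_sq_real, real_inner_smul_left, norm_smul, norm_uvec, hc]
      have hp := pyth θ (g - x)
      have hd2 : d ^ 2 = ⟪nvec θ, g - x⟫ ^ 2 := by rw [hd, sq_abs]
      simp only [Real.norm_eq_abs, mul_one, sq_abs]
      nlinarith [hp]
    have : ‖x + c • uvec θ - g‖ = d := by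
      nlinarith [norm_nonneg (x + c • uvec θ - g)]
    simp [mem_closedBall, dist_eq_norm, this]
  -- membership facts
  have hxMBC : x ∈ closedBall g ‖g - x‖ ∩ cone x g d := by
    constructor
    · simp [mem_closedBall, dist_eq_norm, norm_sub_rev x g]
    · exact ⟨0, le_rfl, g, mem_closedBall_self hd0, by simp⟩
  have hballMBC : closedBall g d ⊆ closedBall g ‖g - x‖ ∩ cone x g d := by
    intro p hp
    exact ⟨closedBall_subset_closedBall hdle hp, 1, zero_le_one, p, hp, by simp⟩
  refine ⟨?_, ?_, ?_⟩
  · -- MTC ⊆ MIC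
    rw [hMTC, hMIC, icone]
    apply union_subset
    · apply convexHull_min _ (convex_convexHull ℝ _)
      intro p hp
      rcases hp with rfl | rfl | rfl
      · exact subset_convexHull ℝ _ (Or.inl rfl)
      · exact subset_convexHull ℝ _ (Or.inr (mem_closedBall_self hd0))
      · exact subset_convexHull ℝ _ (Or.inr hproj)
    · exact (subset_union_right).trans (subset_convexHull ℝ _)
  · -- MIC ⊆ MBC
    rw [hMIC, hMBC, icone]
    apply convexHull_min _ ((convex_closedBall g ‖g - x‖).inter (cone_convex x g d))
    apply union_subset
    · intro p hp
      rw [mem_singleton_iff] at hp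
      exact hp ▸ hxMBC
    · exact hballMBC
  · rw [hMBC, hMB]
    exact inter_subset_left
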